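/- If a position p in an open game has game value α for the open player, then for every ordinal β ≤ α there is a finite sequence of legal moves from p reaching a position with game value exactly β for the same player. -/

import Mathlib

/-- A two-player game of perfect information in extensive form, presented by its
positions, the move relation, the indicator of whose turn it is (`turnO p` means
the open player moves next at `p`) and the positions already won by the open player. -/
structure Game : Type 1 where
  Pos : Type
  move : Pos → Pos → Prop
  turnO : Pos → Prop
  won : Pos → Prop

/-- Auxiliary predicate for one stage of the game-value hierarchy: positions from which
the open player can force, through positions where the closed player never wins control,
either an immediate win or a move of his own into a position satisfying `lt`
(a position decided at an earlier stage). -/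
inductive WinW (G : Game) (lt : G.Pos → Prop) : G.Pos → Prop
  | won (p : G.Pos) : G.won p → WinW G lt p
  | opn (p : G.Pos) : G.turnO p → (∃ q, G.move p q ∧ lt q) → WinW G lt p
  | cls (p : G.Pos) : ¬ G.turnO p → ¬ G.won p →
      (∀ q, G.move p q → WinW G lt q) → WinW G lt p

/-- `Decided G α p` : the position `p` is decided in favour of the open player by stage
`α` of the transfinite game-value hierarchy.  -/
def Decided (G : Game) (α : Ordinal) : G.Pos → Prop :=
  WinW G (fun q => ∃ β : Ordinal, ∃ _ : β < α, Decided G β q)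
termination_by α

/-- `Val G p α` : the position `p` has game value exactly `α` for the open player, i.e.
`α` is the least stage at which `p` is decided.  This agrees with the recursive
definition: won positions have value 0; if the open player moves next the value is the
minimum of the successors' values plus one; if the closed player moves next and all
successors have defined values, the value is their supremum. -/
def Val (G : Game) (p : G.Pos) (α : Ordinal) : Prop :=
  Decided G α p ∧ ∀ β < α, ¬ Decided G β p

theorem WinW_mono {G : Game} {lt1 lt2 : G.Pos → Prop} (h : ∀ q, lt1 q → lt2 q) :
    ∀ p, WinW G lt1 p → WinW G lt2 p := by
  intro p hw
  induction hw with
  | won p h' => exact .won p h'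
  | opn p ht hex =>
    obtain ⟨q, hm, hl⟩ := hex
    exact .opn p ht ⟨q, hm, h q hl⟩
  | cls p ht hw hall ih => exact .cls p ht hw ih

theorem Decided_def (G : Game) (α : Ordinal) :
    Decided G α = WinW G (fun q => ∃ β : Ordinal, ∃ _ : β < α, Decided G β q) := by
  rw [Decided]

theorem Decided_mono {G : Game} {β α : Ordinal} (h : β ≤ α) {p : G.Pos}
    (hd : Decided G β p) : Decided G α p := by
  rw [Decided_def] at hd ⊢
  exact WinW_mono (fun q hq => by obtain ⟨γ, hγ, hdq⟩ := hq; exact ⟨γ, hγ.trans_le h, hdq⟩) p hd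

theorem key {G : Game} {α : Ordinal}
    (IH : ∀ γ < α, ∀ p : G.Pos, Val G p γ → ∀ β ≤ γ,
      ∃ q : G.Pos, Relation.ReflTransGen G.move p q ∧ Val G q β)
    {β : Ordinal} (hβ : β < α) :
    ∀ p : G.Pos, WinW G (fun q => ∃ γ : Ordinal, ∃ _ : γ < α, Decided G γ q) p →
      ¬ Decided G β p →
      ∃ q : G.Pos, Relation.ReflTransGen G.move p q ∧ Val G q β := by
  intro p hw
  induction hw with
  | won p h =>
    intro hnb
    exact absurd (Decided_mono (zero_le (a := β))
      (by rw [Decided_def]; exact .won p h)) hnb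
  | opn p ht hex =>
    intro hnb
    obtain ⟨r, hm, γ, hγ, hdr⟩ := hex
    set S : Set Ordinal := {δ | Decided G δ r} with hSdef
    have hS : S.Nonempty := ⟨γ, hdr⟩
    set γ' := Ordinal.lt_wf.min S hS with hγ'def
    have hmem : Decided G γ' r := Ordinal.lt_wf.min_mem S hS
    have hval : Val G r γ' := ⟨hmem, fun δ hδ hd => Ordinal.lt_wf.not_lt_min S hd hδ⟩
    have hγ'le : γ' ≤ γ := not_lt.1 (Ordinal.lt_wf.not_lt_min S hdr)
    have hβγ' : β ≤ γ' := by
      by_contra hlt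
      push_neg at hlt
      exact hnb (by rw [Decided_def]; exact .opn p ht ⟨r, hm, γ', hlt, hmem⟩)
    obtain ⟨q, hq1, hq2⟩ := IH γ' (hγ'le.trans_lt hγ) r hval β hβγ'
    exact ⟨q, Relation.ReflTransGen.head hm hq1, hq2⟩
  | cls p ht hwon hall ih =>
    intro hnb
    have : ∃ q, G.move p q ∧ ¬ Decided G β q := by
      by_contra h
      push_neg at h
      refine hnb ?_
      rw [Decided_def]
      exact .cls p ht hwon (fun q hq => by
        have := h q hq
        rwa [Decided_def] at this)
    obtain ⟨q, hmq, hnq⟩ := this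
    obtain ⟨r, hr1, hr2⟩ := ih q hmq hnq
    exact ⟨r, Relation.ReflTransGen.head hmq hr1, hr2⟩

theorem main (G : Game) : ∀ α : Ordinal, ∀ p : G.Pos, Val G p α → ∀ β ≤ α,
    ∃ q : G.Pos, Relation.ReflTransGen G.move p q ∧ Val G q β := by
  intro α
  induction α using Ordinal.induction with
  | h α IH =>
    intro p hp β hβ
    rcases hβ.lt_or_eq with hlt | rfl
    · have hd := hp.1
      rw [Decided_def] at hd
      exact key IH hlt p hd (hp.2 β hlt)
    · exact ⟨p, Relation.ReflTransGen.refl, hp⟩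

/-- If a position `p` in an open game has game value `α` for the open player, then for
every ordinal `β ≤ α` there is a finite sequence of legal moves from `p` reaching a
position with game value exactly `β` for the same player. -/
theorem stmt4 (G : Game) (p : G.Pos) (α : Ordinal) (hp : Val G p α)
    (β : Ordinal) (hβ : β ≤ α) :
    ∃ q : G.Pos, Relation.ReflTransGen G.move p q ∧ Val G q β :=
  main G α p hp β hβ
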